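/- Let β > 1, K > 0, and let g : [0,T] → [0,∞) be continuous, left-differentiable on (0,T], with left derivative satisfying d⁻g/dt (t) ≤ -K g(t)^β for all t ∈ (0,T]. Then for all t ∈ [0,T], g(t) ≤ (g(0)^{-(β-1)} + K(β-1)t)^{-1/(β-1)}. -/

import Mathlib

open Real Set

/-- Differential-inequality comparison: left derivative ≤ -K g^β implies polynomial decay. -/
theorem stmt_10 (β K T : ℝ) (hβ : 1 < β) (hK : 0 < K) (hT : 0 < T)
    (g g' : ℝ → ℝ)
    (hcont : ContinuousOn g (Icc 0 T))
    (hnonneg : ∀ t ∈ Icc (0:ℝ) T, 0 ≤ g t)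
    (hg0 : 0 < g 0)
    (hderiv : ∀ t ∈ Ioc (0:ℝ) T, HasDerivWithinAt g (g' t) (Iic t) t)
    (hdissip : ∀ t ∈ Ioc (0:ℝ) T, g' t ≤ -K * g t ^ β) :
    ∀ t ∈ Icc (0:ℝ) T,
      g t ≤ (g 0 ^ (-(β - 1)) + K * (β - 1) * t) ^ (-(1 / (β - 1))) := by
  have hβ1 : (0:ℝ) < β - 1 := by linarith
  have hβ1' : β - 1 ≠ 0 := ne_of_gt hβ1
  set a : ℝ := K * (β - 1) with ha_def
  have ha : 0 < a := mul_pos hK hβ1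
  set c : ℝ := g 0 ^ (-(β - 1)) with hc_def
  have hc : 0 < c := Real.rpow_pos_of_pos hg0 _
  set p : ℝ := -(1 / (β - 1)) with hp_def
  set B : ℝ → ℝ := fun t => (c + a * t) ^ p with hB_def
  have hbase : ∀ t : ℝ, 0 ≤ t → 0 < c + a * t := by
    intro t ht
    have : 0 ≤ a * t := mul_nonneg ha.le ht
    linarith
  have hBpos : ∀ t : ℝ, 0 ≤ t → 0 < B t := fun t ht =>
    Real.rpow_pos_of_pos (hbase t ht) _
  have hB0 : B 0 = g 0 := by
    rw [hB_def]
    simp only [mul_zero, add_zero]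
    rw [hc_def, ← Real.rpow_mul hg0.le]
    rw [show (-(β - 1)) * p = 1 by rw [hp_def]; field_simp]
    exact Real.rpow_one _
  have hBderiv : ∀ t : ℝ, 0 ≤ t → HasDerivAt B (-K * B t ^ β) t := by
    intro t ht
    have h1 : HasDerivAt (fun s : ℝ => c + a * s) a t := by
      simpa using ((hasDerivAt_id t).const_mul a).const_add c
    have h2 := h1.rpow_const (p := p) (Or.inl (hbase t ht).ne')
    convert h2 using 1
    have hpow : (B t) ^ β = (c + a * t) ^ (p * β) :=
      (Real.rpow_mul (hbase t ht).le p β).symm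
    have hpβ : p * β = p - 1 := by rw [hp_def]; field_simp; ring
    have hap : a * p = -K := by rw [ha_def, hp_def]; field_simp
    rw [hpow, hpβ, ← hap]
  have hBcont : ContinuousOn B (Icc 0 T) := fun t ht =>
    ((hBderiv t ht.1).continuousAt).continuousWithinAt
  -- key perturbed estimate
  have key : ∀ ε : ℝ, 0 < ε → ∀ t ∈ Icc (0:ℝ) T, g t ≤ B t + ε * t := by
    intro ε hε
    by_contra hcon
    push_neg at hcon
    obtain ⟨t₁, ht₁, hgt⟩ := hcon
    set h : ℝ → ℝ := fun t => g t - B t - ε * t with hh_def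
    have hht₁ : 0 < h t₁ := by simp only [hh_def]; linarith
    have hhcont : ContinuousOn h (Icc 0 T) :=
      (hcont.sub hBcont).sub ((continuous_const.mul continuous_id).continuousOn)
    have hh0 : h 0 = 0 := by simp [hh_def, hB0]
    have ht₁0 : 0 < t₁ := by
      rcases eq_or_lt_of_le ht₁.1 with h0 | h0
      · exfalso; rw [← h0] at hht₁; rw [hh0] at hht₁; exact lt_irrefl 0 hht₁
      · exact h0
    set A : Set ℝ := {t | t ∈ Icc 0 t₁ ∧ h t ≤ 0} with hA_def
    have hA0 : (0:ℝ) ∈ A := ⟨⟨le_refl 0, ht₁0.le⟩, le_of_eq hh0⟩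
    have hAbdd : BddAbove A := ⟨t₁, fun x hx => hx.1.2⟩
    have hsub : Icc 0 t₁ ⊆ Icc 0 T := Icc_subset_Icc le_rfl ht₁.2
    have hAclosed : IsClosed A := by
      have h1 : ContinuousOn h (Icc 0 t₁) := hhcont.mono hsub
      have := h1.preimage_isClosed_of_isClosed isClosed_Icc (isClosed_Iic (a := (0:ℝ)))
      convert this using 1
      rfl
    set t' : ℝ := sSup A with ht'_def
    have ht'A : t' ∈ A := hAclosed.csSup_mem ⟨0, hA0⟩ hAbdd
    have ht'0 : 0 ≤ t' := ht'A.1.1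
    have ht'le : t' ≤ t₁ := ht'A.1.2
    have ht'lt : t' < t₁ := by
      rcases eq_or_lt_of_le ht'le with h0 | h0
      · exfalso; rw [h0] at ht'A; linarith [ht'A.2]
      · exact h0
    have hpos : ∀ s, t' < s → s ≤ t₁ → 0 < h s := by
      intro s hs1 hs2
      by_contra hns
      push_neg at hns
      have hsA : s ∈ A := ⟨⟨le_trans ht'0 hs1.le, hs2⟩, hns⟩
      exact absurd (le_csSup hAbdd hsA) (not_le.mpr hs1)
    -- time reversal
    set σ : ℝ → ℝ := fun s => t' + t₁ - s with hσ_def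
    set w : ℝ → ℝ := fun s => h (σ s) with hw_def
    have hσmaps : MapsTo σ (Icc t' t₁) (Icc t' t₁) := by
      intro x hx
      constructor
      · simp only [hσ_def]; linarith [hx.2]
      · simp only [hσ_def]; linarith [hx.1]
    have hsub2 : Icc t' t₁ ⊆ Icc 0 T := fun x hx => ⟨le_trans ht'0 hx.1, le_trans hx.2 ht₁.2⟩
    have hσt' : σ t' = t₁ := by simp only [hσ_def]; ring
    have hσt₁ : σ t₁ = t' := by simp only [hσ_def]; ring
    have hwcont : ContinuousOn w (Icc t' t₁) :=
      (hhcont.mono hsub2).comp ((continuous_const.sub continuous_id).continuousOn)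
        hσmaps
    set w' : ℝ → ℝ := fun x => (g' (σ x) - (-K * B (σ x) ^ β) - ε) * (-1) with hw'_def
    have hwderiv : ∀ x ∈ Ico t' t₁, HasDerivWithinAt w (w' x) (Ici x) x := by
      intro x hx
      have hσx1 : t' < σ x := by simp only [hσ_def]; linarith [hx.2]
      have hσx2 : σ x ≤ t₁ := by simp only [hσ_def]; linarith [hx.1]
      have hσxT : σ x ∈ Ioc (0:ℝ) T :=
        ⟨lt_of_le_of_lt ht'0 hσx1, le_trans hσx2 ht₁.2⟩
      have hg : HasDerivWithinAt g (g' (σ x)) (Iic (σ x)) (σ x) := hderiv _ hσxT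
      have hB' : HasDerivWithinAt B (-K * B (σ x) ^ β) (Iic (σ x)) (σ x) :=
        (hBderiv _ hσxT.1.le).hasDerivWithinAt
      have hid : HasDerivWithinAt (fun t : ℝ => ε * t) ε (Iic (σ x)) (σ x) := by
        simpa using ((hasDerivAt_id (σ x)).const_mul ε).hasDerivWithinAt
      have hh' : HasDerivWithinAt h (g' (σ x) - (-K * B (σ x) ^ β) - ε) (Iic (σ x)) (σ x) :=
        (hg.sub hB').sub hid
      have hσd : HasDerivWithinAt σ (-1) (Ici x) x := by
        simpa using ((hasDerivAt_id x).const_sub (t' + t₁)).hasDerivWithinAt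
      have hmaps : MapsTo σ (Ici x) (Iic (σ x)) := by
        intro y hy
        simp only [hσ_def, mem_Iic]
        simp only [mem_Ici] at hy
        linarith
      exact hh'.comp x hσd hmaps
    have hw'pos : ∀ x ∈ Ico t' t₁, ε ≤ w' x := by
      intro x hx
      have hσx1 : t' < σ x := by simp only [hσ_def]; linarith [hx.2]
      have hσx2 : σ x ≤ t₁ := by simp only [hσ_def]; linarith [hx.1]
      have hσxT : σ x ∈ Ioc (0:ℝ) T :=
        ⟨lt_of_le_of_lt ht'0 hσx1, le_trans hσx2 ht₁.2⟩
      have hhp : 0 < h (σ x) := hpos _ hσx1 hσx2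
      have hgB : B (σ x) ≤ g (σ x) := by
        have hεσ : 0 ≤ ε * σ x := mul_nonneg hε.le hσxT.1.le
        simp only [hh_def] at hhp; linarith
      have hmono : B (σ x) ^ β ≤ g (σ x) ^ β :=
        Real.rpow_le_rpow (hBpos _ hσxT.1.le).le hgB (by linarith)
      have h1 : g' (σ x) ≤ -K * g (σ x) ^ β := hdissip _ hσxT
      have h2 : -K * g (σ x) ^ β ≤ -K * B (σ x) ^ β := by nlinarith
      simp only [hw'_def]
      nlinarith
    -- fencing theorem: constant lower bound
    have hfence := image_le_of_deriv_right_le_deriv_boundary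
      (f := fun _ : ℝ => h t₁) (f' := fun _ : ℝ => 0) (a := t') (b := t₁)
      continuousOn_const (fun x _ => hasDerivWithinAt_const x _ _)
      (le_of_eq (by simp only [hw_def]; rw [hσt']))
      hwcont hwderiv
      (fun x hx => le_trans hε.le (hw'pos x hx))
    have hwt₁ : h t₁ ≤ w t₁ := hfence (right_mem_Icc.mpr ht'le)
    have : w t₁ = h t' := by simp only [hw_def]; rw [hσt₁]
    rw [this] at hwt₁
    linarith [ht'A.2]
  -- pass to the limit ε → 0
  intro t ht
  show g t ≤ B t
  apply le_of_forall_pos_le_add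
  intro δ hδ
  have hεpos : 0 < δ / T := div_pos hδ hT
  have h1 := key (δ / T) hεpos t ht
  have h2 : δ / T * t ≤ δ := by
    rw [div_mul_eq_mul_div, div_le_iff₀ hT]
    nlinarith [ht.2]
  linarith
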